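/- arXiv:2012.09106 — 2 statements merged into one kernel-verified Lean document; each statement's English description precedes it below -/
import Mathlib

section
/- Let M ≥ 1, let P ∈ ℂ^{M×M} be positive semidefinite, and let κ ≥ 0 be real. Then det(I + κP) is a real number ≥ 1, and log₂((det(I + κP)).re) ≤ M · log₂(1 + κ·(tr P).re / M). -/
open Matrix
open scoped ComplexOrder

/-- For positive semidefinite `P` and `κ ≥ 0`, `det(I + κP)` is a real number `≥ 1`
and `log₂ det(I + κP) ≤ M log₂(1 + κ tr(P)/M)`. -/
theorem logb_det_le_of_posSemidef
    (M : ℕ) (hM : 1 ≤ M) (P : Matrix (Fin M) (Fin M) ℂ)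
    (hP : P.PosSemidef) (κ : ℝ) (hκ : 0 ≤ κ) :
    ((1 : Matrix (Fin M) (Fin M) ℂ) + (κ : ℂ) • P).det.im = 0 ∧
    1 ≤ ((1 : Matrix (Fin M) (Fin M) ℂ) + (κ : ℂ) • P).det.re ∧
    Real.logb 2 (((1 : Matrix (Fin M) (Fin M) ℂ) + (κ : ℂ) • P).det.re) ≤
      (M : ℝ) * Real.logb 2 (1 + κ * P.trace.re / (M : ℝ)) := by
  classical
  have hH := hP.1
  have hspec := hH.spectral_theorem
  rw [Unitary.conjStarAlgAut_apply] at hspec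
  set μ : Fin M → ℝ := hH.eigenvalues
  have hμ : ∀ i, 0 ≤ μ i := hP.eigenvalues_nonneg
  have hUU : star (hH.eigenvectorUnitary : Matrix (Fin M) (Fin M) ℂ) * hH.eigenvectorUnitary = 1 :=
    (Matrix.mem_unitaryGroup_iff').mp hH.eigenvectorUnitary.2
  have hUU' : (hH.eigenvectorUnitary : Matrix (Fin M) (Fin M) ℂ) * star (hH.eigenvectorUnitary : Matrix (Fin M) (Fin M) ℂ) = 1 :=
    (Matrix.mem_unitaryGroup_iff).mp hH.eigenvectorUnitary.2
  -- determinant as a real product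
  have hdet : ((1 : Matrix (Fin M) (Fin M) ℂ) + (κ : ℂ) • P).det
      = ((∏ i, (1 + κ * μ i) : ℝ) : ℂ) := by
    have h1 : (1 : Matrix (Fin M) (Fin M) ℂ) + (κ : ℂ) • P
        = (hH.eigenvectorUnitary : Matrix (Fin M) (Fin M) ℂ) * ((1 : Matrix (Fin M) (Fin M) ℂ)
          + (κ : ℂ) • diagonal (RCLike.ofReal ∘ μ)) * star (hH.eigenvectorUnitary : Matrix (Fin M) (Fin M) ℂ) := by
      rw [Matrix.mul_add, Matrix.add_mul, Matrix.mul_one, hUU']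
      congr 1
      rw [Matrix.mul_smul, Matrix.smul_mul, ← hspec]
    have h2 : (1 : Matrix (Fin M) (Fin M) ℂ) + (κ : ℂ) • diagonal (RCLike.ofReal ∘ μ)
        = diagonal (fun i => ((1 + κ * μ i : ℝ) : ℂ)) := by
      ext i j
      by_cases h : i = j <;>
        simp [h, Matrix.one_apply, Matrix.diagonal_apply]
    rw [h1, Matrix.det_mul, Matrix.det_mul, mul_comm, ← mul_assoc, ← Matrix.det_mul, hUU,
      Matrix.det_one, one_mul, h2, Matrix.det_diagonal, Complex.ofReal_prod]
  -- trace as a real sum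
  have htr : P.trace.re = ∑ i, μ i := by
    have : P.trace = ((∑ i, μ i : ℝ) : ℂ) := by
      conv_lhs => rw [hspec]
      rw [Matrix.trace_mul_cycle, hUU, Matrix.one_mul, Matrix.trace_diagonal,
        Complex.ofReal_sum]
      rfl
    rw [this, Complex.ofReal_re]
  set z : Fin M → ℝ := fun i => 1 + κ * μ i with hz
  have hz1 : ∀ i, (1 : ℝ) ≤ z i := fun i => le_add_of_nonneg_right (mul_nonneg hκ (hμ i))
  have hz0 : ∀ i, (0 : ℝ) ≤ z i := fun i => le_trans zero_le_one (hz1 i)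
  have hM0 : (0 : ℝ) < M := by exact_mod_cast hM
  have hMne : (M : ℝ) ≠ 0 := ne_of_gt hM0
  have h1le : (1 : ℝ) ≤ ∏ i, z i := by
    calc (1:ℝ) = ∏ _i : Fin M, (1:ℝ) := by simp
      _ ≤ ∏ i, z i := Finset.prod_le_prod (fun i _ => zero_le_one) (fun i _ => hz1 i)
  have h1A : (0 : ℝ) < ∏ i, z i := lt_of_lt_of_le zero_lt_one h1le
  have hre : ((1 : Matrix (Fin M) (Fin M) ℂ) + (κ : ℂ) • P).det.re = ∏ i, z i := by
    rw [hdet, Complex.ofReal_re]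
  refine ⟨by rw [hdet, Complex.ofReal_im], by rw [hre]; exact h1le, ?_⟩
  rw [hre, htr]
  -- AM-GM part
  set A : ℝ := 1 + κ * (∑ i, μ i) / M with hA
  have hAsum : A = ∑ i : Fin M, (M : ℝ)⁻¹ * z i := by
    rw [hA, hz]
    rw [← Finset.mul_sum]
    simp only [Finset.sum_add_distrib, Finset.sum_const, Finset.card_univ, Fintype.card_fin,
      nsmul_eq_mul, mul_one, ← Finset.mul_sum]
    field_simp
  have hamgm : (∏ i, z i ^ ((M : ℝ)⁻¹)) ≤ A := by
    rw [hAsum]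
    exact Real.geom_mean_le_arith_mean_weighted Finset.univ (fun _ => (M : ℝ)⁻¹) z
      (fun i _ => by positivity) (by simp [hMne]) (fun i _ => hz0 i)
  have hprod : (∏ i, z i ^ ((M : ℝ)⁻¹)) ^ M = ∏ i, z i := by
    rw [← Finset.prod_pow]
    congr 1; funext i
    rw [← Real.rpow_natCast (z i ^ ((M:ℝ)⁻¹)) M, ← Real.rpow_mul (hz0 i),
      inv_mul_cancel₀ hMne, Real.rpow_one]
  have hle : ∏ i, z i ≤ A ^ M := by
    rw [← hprod]
    exact pow_le_pow_left₀ (Finset.prod_nonneg fun i _ => Real.rpow_nonneg (hz0 i) _) hamgm M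
  calc Real.logb 2 (∏ i, z i) ≤ Real.logb 2 (A ^ M) :=
        Real.logb_le_logb_of_le (by norm_num) h1A hle
    _ = (M : ℝ) * Real.logb 2 A := Real.logb_pow 2 A M
end

section
/- Let (Ω, μ) be a probability space, M ≥ 1, κ ≥ 0, and let P : Ω → ℂ^{M×M} be a random matrix such that P(ω) is positive semidefinite for every ω, the real-valued function ω ↦ (tr P(ω)).re is integrable, and ω ↦ log₂((det(I + κP(ω))).re) is integrable. Then ∫ log₂((det(I + κP(ω))).re) dμ(ω) ≤ M · log₂(1 + κ·(∫ (tr P(ω)).re dμ(ω)) / M). (Proposition: applied with P(ω) = (WᴴH(ω)V)(WᴴH(ω)V)ᴴ and M the number of receive beams, this upper-bounds the average spectral efficiency of single-user SVD precoding by M·log₂(1 + κ·tr(Σ̄)/M), where Σ̄ is the effective channel covariance.) -/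
open Matrix MeasureTheory
open scoped ComplexOrder


private lemma trace_eq_sum_eigs {M : ℕ} {A : Matrix (Fin M) (Fin M) ℂ} (hA : A.IsHermitian) :
    A.trace = ∑ i, (hA.eigenvalues i : ℂ) := by
  conv_lhs => rw [hA.spectral_theorem]
  rw [Unitary.conjStarAlgAut_apply, Matrix.trace_mul_cycle,
    (Matrix.mem_unitaryGroup_iff'.mp hA.eigenvectorUnitary.2), Matrix.one_mul,
    Matrix.trace_diagonal]
  rfl

private lemma amgm_fin {M : ℕ} (hM : 1 ≤ M) (f : Fin M → ℝ) (hf : ∀ i, 0 ≤ f i) :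
    ∏ i, f i ≤ ((∑ i, f i) / M) ^ M := by
  have hM' : (0:ℝ) < M := by exact_mod_cast Nat.pos_of_ne_zero (by omega)
  have key := Real.geom_mean_le_arith_mean_weighted Finset.univ (fun _ => (M:ℝ)⁻¹) f
    (fun _ _ => by positivity)
    (by simp [Finset.card_univ]; field_simp)
    (fun i _ => hf i)
  rw [Real.finset_prod_rpow _ _ (fun i _ => hf i)] at key
  have hsum : ∑ i, (M:ℝ)⁻¹ * f i = (∑ i, f i) / M := by
    rw [← Finset.mul_sum]; ring
  rw [hsum] at key
  have hprod : 0 ≤ ∏ i, f i := Finset.prod_nonneg (fun i _ => hf i)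
  have havg : 0 ≤ (∑ i, f i) / M := div_nonneg (Finset.sum_nonneg fun i _ => hf i) hM'.le
  calc ∏ i, f i = ((∏ i, f i) ^ ((M:ℝ)⁻¹)) ^ (M:ℕ) := by
        rw [← Real.rpow_natCast (_ ^ _), ← Real.rpow_mul hprod, inv_mul_cancel₀ (ne_of_gt hM'),
          Real.rpow_one]
    _ ≤ ((∑ i, f i) / M) ^ (M:ℕ) :=
        pow_le_pow_left₀ (Real.rpow_nonneg hprod _) key M

private lemma smul_posSemidef {M : ℕ} {κ : ℝ} (hκ : 0 ≤ κ)
    {P : Matrix (Fin M) (Fin M) ℂ} (hP : P.PosSemidef) : ((κ : ℂ) • P).PosSemidef := by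
  refine Matrix.posSemidef_iff_dotProduct_mulVec.mpr ⟨?_, ?_⟩
  · show ((κ : ℂ) • P)ᴴ = (κ : ℂ) • P
    rw [Matrix.conjTranspose_smul, hP.1.eq, Complex.star_def, Complex.conj_ofReal]
  · intro x
    rw [Matrix.smul_mulVec, dotProduct_smul, smul_eq_mul]
    have h := hP.dotProduct_mulVec_nonneg x
    rw [Complex.nonneg_iff] at h ⊢
    refine ⟨?_, ?_⟩
    · rw [Complex.re_ofReal_mul]
      exact mul_nonneg hκ h.1
    · rw [Complex.im_ofReal_mul, ← h.2, mul_zero]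

private lemma pointwise_bound {M : ℕ} (hM : 1 ≤ M) {κ : ℝ} (hκ : 0 ≤ κ)
    {P : Matrix (Fin M) (Fin M) ℂ} (hP : P.PosSemidef) :
    Real.logb 2 (((1 : Matrix (Fin M) (Fin M) ℂ) + (κ : ℂ) • P).det.re) ≤
      (M : ℝ) * Real.logb 2 (1 + κ * P.trace.re / M) := by
  have hM' : (0:ℝ) < M := by exact_mod_cast Nat.pos_of_ne_zero (by omega)
  set A : Matrix (Fin M) (Fin M) ℂ := (1 : Matrix (Fin M) (Fin M) ℂ) + (κ : ℂ) • P with hAdef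
  have hApsd : A.PosSemidef := Matrix.PosSemidef.one.add (smul_posSemidef hκ hP)
  have hAH : A.IsHermitian := hApsd.1
  set ν : Fin M → ℝ := hAH.eigenvalues with hν
  have hνnn : ∀ i, 0 ≤ ν i := hApsd.eigenvalues_nonneg
  -- determinant
  have hdet : A.det.re = ∏ i, ν i := by
    rw [hAH.det_eq_prod_eigenvalues]
    norm_cast
  -- trace
  have htraceP : P.trace.re = ∑ i, hP.1.eigenvalues i := by
    rw [trace_eq_sum_eigs hP.1, ← Complex.ofReal_sum, Complex.ofReal_re]
  have htrP_nonneg : 0 ≤ P.trace.re := by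
    rw [htraceP]; exact Finset.sum_nonneg fun i _ => hP.eigenvalues_nonneg i
  have hsumν : ∑ i, ν i = M + κ * P.trace.re := by
    have h1 : A.trace = ∑ i, (ν i : ℂ) := trace_eq_sum_eigs hAH
    have h2 : A.trace = (M : ℂ) + (κ : ℂ) * P.trace := by
      rw [hAdef, Matrix.trace_add, Matrix.trace_smul, Matrix.trace_one, smul_eq_mul]
      simp
    have := h1.symm.trans h2
    have hre := congrArg Complex.re this
    rw [← Complex.ofReal_sum, Complex.ofReal_re] at hre
    rw [hre]
    simp [Complex.re_ofReal_mul]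
  have hkey : 1 + κ * P.trace.re / M = (∑ i, ν i) / M := by
    rw [hsumν]; field_simp
  have hbig : 1 ≤ 1 + κ * P.trace.re / M := by
    have : 0 ≤ κ * P.trace.re / M := by positivity
    linarith
  rw [hdet, hkey]
  have hamgm : ∏ i, ν i ≤ ((∑ i, ν i) / M) ^ M := amgm_fin hM ν hνnn
  rcases eq_or_lt_of_le (Finset.prod_nonneg fun i (_ : i ∈ Finset.univ) => hνnn i) with h0 | h0
  · rw [← h0, Real.logb_zero]
    have : 0 ≤ Real.logb 2 ((∑ i, ν i) / M) := Real.logb_nonneg one_lt_two (hkey ▸ hbig)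
    positivity
  · calc Real.logb 2 (∏ i, ν i) ≤ Real.logb 2 (((∑ i, ν i) / M) ^ M) :=
          Real.logb_le_logb_of_le one_lt_two h0 hamgm
      _ = (M:ℝ) * Real.logb 2 ((∑ i, ν i) / M) := Real.logb_pow 2 _ M

private lemma trace_re_nonneg {M : ℕ} {P : Matrix (Fin M) (Fin M) ℂ} (hP : P.PosSemidef) :
    0 ≤ P.trace.re := by
  rw [trace_eq_sum_eigs hP.1, ← Complex.ofReal_sum, Complex.ofReal_re]
  exact Finset.sum_nonneg fun i _ => hP.eigenvalues_nonneg i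

/-- Jensen-type bound on the average spectral efficiency: if `P(ω)` is positive
semidefinite for all `ω` and `κ ≥ 0`, then
`𝔼[log₂ det(I + κ P)] ≤ M log₂(1 + κ 𝔼[tr P] / M)`. Applied with
`P = (WᴴHV)(WᴴHV)ᴴ`, this upper-bounds the average SE of single-user SVD precoding
by `M log₂(1 + κ tr(Σ̄)/M)`. -/
theorem avg_logb_det_le_of_posSemidef
    {Ω : Type*} [MeasurableSpace Ω] (μ : Measure Ω) [IsProbabilityMeasure μ]
    (M : ℕ) (hM : 1 ≤ M) (κ : ℝ) (hκ : 0 ≤ κ)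
    (P : Ω → Matrix (Fin M) (Fin M) ℂ) (hP : ∀ ω, (P ω).PosSemidef)
    (htr : Integrable (fun ω => (P ω).trace.re) μ)
    (hlog : Integrable
      (fun ω => Real.logb 2 (((1 : Matrix (Fin M) (Fin M) ℂ) + (κ : ℂ) • P ω).det.re)) μ) :
    ∫ ω, Real.logb 2 (((1 : Matrix (Fin M) (Fin M) ℂ) + (κ : ℂ) • P ω).det.re) ∂μ ≤
      (M : ℝ) * Real.logb 2 (1 + κ * (∫ ω, (P ω).trace.re ∂μ) / (M : ℝ)) := by
  have hM' : (0:ℝ) < M := by exact_mod_cast Nat.pos_of_ne_zero (by omega)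
  have hlog2 : (0:ℝ) < Real.log 2 := Real.log_pos one_lt_two
  set f : Ω → ℝ := fun ω => (P ω).trace.re with hf
  set g : ℝ → ℝ := fun x => (M:ℝ) * Real.logb 2 (1 + κ * x / M) with hg
  have hfnn : ∀ ω, 0 ≤ f ω := fun ω => trace_re_nonneg (hP ω)
  -- measurability of g
  have hgm : Measurable g := by
    have hl : Measurable fun x : ℝ => Real.log (1 + κ * x / M) :=
      Real.measurable_log.comp (by fun_prop)
    simpa [hg, Real.logb, Function.comp] using (hl.div_const (Real.log 2)).const_mul (M:ℝ)
  have hgf_meas : AEStronglyMeasurable (fun ω => g (f ω)) μ :=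
    (hgm.comp_aemeasurable htr.aemeasurable).aestronglyMeasurable
  -- bound for integrability
  have hbound : ∀ ω, ‖g (f ω)‖ ≤ (κ / Real.log 2) * f ω := by
    intro ω
    have h0 : 0 ≤ f ω := hfnn ω
    have h2 : 0 ≤ κ * f ω / M := by positivity
    have h1 : (0:ℝ) < 1 + κ * f ω / M := by linarith
    have hlogle : Real.log (1 + κ * f ω / M) ≤ κ * f ω / M := by
      have := Real.log_le_sub_one_of_pos h1; linarith
    have hgnn : 0 ≤ g (f ω) :=
      mul_nonneg hM'.le (Real.logb_nonneg one_lt_two (by linarith))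
    rw [Real.norm_eq_abs, abs_of_nonneg hgnn]
    show (M:ℝ) * Real.logb 2 (1 + κ * f ω / M) ≤ _
    rw [Real.logb]
    calc (M:ℝ) * (Real.log (1 + κ * f ω / M) / Real.log 2)
        ≤ (M:ℝ) * ((κ * f ω / M) / Real.log 2) := by gcongr
      _ = (κ / Real.log 2) * f ω := by field_simp
  have hgfi : Integrable (fun ω => g (f ω)) μ :=
    Integrable.mono' (htr.const_mul (κ / Real.log 2)) hgf_meas
      (Filter.Eventually.of_forall hbound)
  -- pointwise bound
  have step1 : ∫ ω, Real.logb 2 (((1 : Matrix (Fin M) (Fin M) ℂ) + (κ : ℂ) • P ω).det.re) ∂μ ≤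
      ∫ ω, g (f ω) ∂μ :=
    integral_mono hlog hgfi fun ω => pointwise_bound hM hκ (hP ω)
  -- concavity
  have hgeq : g = (((M:ℝ)/Real.log 2) • Real.log) ∘ (AffineMap.lineMap (1:ℝ) (1 + κ/M)) := by
    funext x
    have harg : x • ((1 + κ/M) - 1) + 1 = 1 + κ * x / M := by
      rw [smul_eq_mul]; ring
    simp only [Function.comp_apply, AffineMap.lineMap_apply_module, Pi.smul_apply, smul_eq_mul,
      harg, hg, Real.logb]
    ring
  have hconc : ConcaveOn ℝ (Set.Ici 0) g := by
    have hlin : ConcaveOn ℝ (Set.Ioi 0) (((M:ℝ)/Real.log 2) • Real.log) :=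
      (strictConcaveOn_log_Ioi.concaveOn).smul (by positivity)
    have hcomp := hlin.comp_affineMap (AffineMap.lineMap (1:ℝ) (1 + κ/M))
    have hsub : Set.Ici (0:ℝ) ⊆ (AffineMap.lineMap (1:ℝ) (1 + κ/M)) ⁻¹' (Set.Ioi 0) := by
      intro x hx
      have hx0 : (0:ℝ) ≤ x := hx
      have : 0 ≤ x * (κ/M) := mul_nonneg hx0 (by positivity)
      simp only [Set.mem_preimage, AffineMap.lineMap_apply_module, Set.mem_Ioi, smul_eq_mul]
      nlinarith
    rw [hgeq]
    exact hcomp.subset hsub (convex_Ici 0)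
  have hcont : ContinuousOn g (Set.Ici 0) := by
    intro x hx
    have hx0 : (0:ℝ) ≤ x := hx
    have h2 : 0 ≤ κ * x / M := by positivity
    have hpos : (0:ℝ) < 1 + κ * x / M := by linarith
    apply ContinuousAt.continuousWithinAt
    have hin : ContinuousAt (fun x : ℝ => 1 + κ * x / (M:ℝ)) x := by fun_prop
    have hout : ContinuousAt (fun x : ℝ => Real.logb 2 (1 + κ * x / (M:ℝ))) x :=
      ContinuousAt.comp (f := fun x : ℝ => 1 + κ * x / (M:ℝ)) (Real.continuousAt_logb hpos.ne') hin
    exact continuousAt_const.mul hout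
  have jensen : ∫ ω, g (f ω) ∂μ ≤ g (∫ ω, f ω ∂μ) :=
    hconc.le_map_integral hcont isClosed_Ici
      (Filter.Eventually.of_forall fun ω => hfnn ω) htr hgfi
  exact step1.trans jensen
end
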